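/- arXiv:1602.01328 — 3 statements merged into one kernel-verified Lean document; each statement's English description precedes it below -/
import Mathlib

section
/- (Cycle lemma identity) Let (W_i)_{i≥0} be a random walk on ℤ with i.i.d. increments, started at W_0 = 1. Then for every k > n ≥ 0, P(W_i > 0 for 1 ≤ i < k, and W_k = 0) = (1/k) · P(W_k = 0). -/
namespace CycleAux
variable {k : ℕ}

/-- Partial sums of the periodic extension of `x`. -/
def T (hk : 0 < k) (x : Fin k → ℤ) (j : ℕ) : ℤ :=
  ∑ i ∈ Finset.range j, x ⟨i % k, Nat.mod_lt i hk⟩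

/-- Cyclic rotation of the increments. -/
def rot (r : Fin k) (x : Fin k → ℤ) : Fin k → ℤ := fun i => x (i + r)

/-- "Dominance" event: partial sums nonnegative before `k`, total sum `-1`. -/
def good (hk : 0 < k) (x : Fin k → ℤ) : Prop :=
  (∀ j, 1 ≤ j → j < k → 0 ≤ T hk x j) ∧ T hk x k = -1

lemma T_succ (hk : 0 < k) (x : Fin k → ℤ) (j : ℕ) :
    T hk x (j + 1) = T hk x j + x ⟨j % k, Nat.mod_lt j hk⟩ := by
  simp [T, Finset.sum_range_succ]

lemma T_add_k (hk : 0 < k) (x : Fin k → ℤ) (j : ℕ) :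
    T hk x (j + k) = T hk x j + T hk x k := by
  induction j with
  | zero => simp [T]
  | succ j ih =>
      have e : j + 1 + k = (j + k) + 1 := by omega
      rw [e, T_succ, ih, T_succ]
      have hx : x ⟨(j + k) % k, Nat.mod_lt _ hk⟩ = x ⟨j % k, Nat.mod_lt _ hk⟩ := by
        congr 1
        exact Fin.ext (Nat.add_mod_right j k)
      rw [hx]; ring

lemma T_rot (hk : 0 < k) (r : Fin k) (x : Fin k → ℤ) (j : ℕ) :
    T hk (rot r x) j = T hk x (r.val + j) - T hk x r.val := by
  induction j with
  | zero => simp [T]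
  | succ j ih =>
      have h1 : r.val + (j + 1) = (r.val + j) + 1 := by omega
      rw [T_succ, ih, h1, T_succ]
      have h2 : rot r x ⟨j % k, Nat.mod_lt j hk⟩
          = x ⟨(r.val + j) % k, Nat.mod_lt _ hk⟩ := by
        simp only [rot]
        congr 1
        apply Fin.ext
        simp only [Fin.add_def]
        conv_rhs => rw [Nat.add_mod]
        rw [Nat.mod_eq_of_lt r.isLt, add_comm]
      rw [h2]; ring

/-- rotation-invariance of the total sum -/
lemma T_rot_k (hk : 0 < k) (r : Fin k) (x : Fin k → ℤ) :
    T hk (rot r x) k = T hk x k := by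
  rw [T_rot, T_add_k]
  ring

def c (hk : 0 < k) (x : Fin k → ℤ) (r : ℕ) : Prop :=
  ∀ j, 1 ≤ j → j < k → T hk x r ≤ T hk x (r + j)

lemma good_rot_iff (hk : 0 < k) (r : Fin k) (x : Fin k → ℤ) :
    good hk (rot r x) ↔ (T hk x k = -1 ∧ c hk x r.val) := by
  constructor
  · rintro ⟨h1, h2⟩
    refine ⟨by rw [← T_rot_k hk r x]; exact h2, fun j hj1 hj2 => ?_⟩
    have := h1 j hj1 hj2
    rw [T_rot] at this; omega
  · rintro ⟨hs, hc⟩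
    refine ⟨fun j hj1 hj2 => ?_, by rw [T_rot_k hk r x]; exact hs⟩
    rw [T_rot]
    have := hc j hj1 hj2; omega

lemma c_unique (hk : 0 < k) (x : Fin k → ℤ) (hs : T hk x k = -1)
    {r r' : ℕ} (hr : r < k) (hr' : r' < k) (h : c hk x r) (h' : c hk x r') :
    r = r' := by
  by_contra hne
  -- wlog r < r'
  rcases Nat.lt_or_ge r r' with hlt | hge
  · have h1 := h (r' - r) (by omega) (by omega)
    have h2 := h' (k - (r' - r)) (by omega) (by omega)
    have e1 : r + (r' - r) = r' := by omega
    have e2 : r' + (k - (r' - r)) = r + k := by omega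
    rw [e1] at h1
    rw [e2, T_add_k, hs] at h2
    omega
  · have hlt : r' < r := by omega
    have h1 := h' (r - r') (by omega) (by omega)
    have h2 := h (k - (r - r')) (by omega) (by omega)
    have e1 : r' + (r - r') = r := by omega
    have e2 : r + (k - (r - r')) = r' + k := by omega
    rw [e1] at h1
    rw [e2, T_add_k, hs] at h2
    omega

lemma c_exists (hk : 0 < k) (x : Fin k → ℤ) (hs : T hk x k = -1) :
    ∃ r : ℕ, r < k ∧ c hk x r := by
  have hQ : ∃ m, 1 ≤ m ∧ m ≤ k ∧ ∀ j, 1 ≤ j → j ≤ k → T hk x m ≤ T hk x j := by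
    obtain ⟨m, hm, hmin⟩ := Finset.exists_min_image (Finset.Icc 1 k) (T hk x)
      ⟨k, Finset.mem_Icc.mpr ⟨hk, le_rfl⟩⟩
    simp only [Finset.mem_Icc] at hm
    exact ⟨m, hm.1, hm.2, fun j hj1 hj2 => hmin j (Finset.mem_Icc.mpr ⟨hj1, hj2⟩)⟩
  classical
  set m := Nat.find hQ with hmdef
  obtain ⟨hm1, hmk, hmin⟩ := Nat.find_spec hQ
  -- strict minimality before m
  have hstrict : ∀ j, 1 ≤ j → j < m → T hk x m < T hk x j := by
    intro j hj1 hjm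
    have hnot := Nat.find_min hQ hjm
    by_contra hle
    push_neg at hle
    exact hnot ⟨hj1, by omega, fun j' hj1' hj2' => le_trans hle (hmin j' hj1' hj2')⟩
  by_cases hmeq : m = k
  · refine ⟨0, hk, fun j hj1 hj2 => ?_⟩
    have h0 : T hk x 0 = 0 := by simp [T]
    have := hstrict j hj1 (by omega)
    rw [hmeq, hs] at this
    simp only [Nat.zero_add, h0]
    omega
  · refine ⟨m, by omega, fun j hj1 hj2 => ?_⟩
    rcases le_or_gt (m + j) k with hle | hgt
    · exact hmin (m + j) (by omega) hle
    · have e : m + j = (m + j - k) + k := by omega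
      rw [e, T_add_k, hs]
      have := hstrict (m + j - k) (by omega) (by omega)
      omega

end CycleAux

open MeasureTheory ProbabilityTheory CycleAux

/-- Cycle lemma identity: for a random walk `W` on `ℤ` started at `1` with i.i.d.
increments, for every `k > n ≥ 0`,
`P(W_i > 0 for 1 ≤ i < k, W_k = 0) = (1/k)·P(W_k = 0)`. -/
theorem cycle_lemma {Ω : Type*} [MeasurableSpace Ω]
    (P : Measure Ω) [IsProbabilityMeasure P]
    (X : ℕ → Ω → ℤ) (hXmeas : ∀ i, Measurable (X i))
    (hindep : iIndepFun X P)
    (hident : ∀ i, IdentDistrib (X i) (X 0) P P)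
    (W : ℕ → Ω → ℤ) (hW : ∀ n ω, W n ω = 1 + ∑ i ∈ Finset.range n, X i ω)
    (n k : ℕ) (hnk : n < k) :
    (P {ω | (∀ i, 1 ≤ i → i < k → 0 < W i ω) ∧ W k ω = 0}).toReal
      = (1 / (k : ℝ)) * (P {ω | W k ω = 0}).toReal := by
  classical
  have hk : 0 < k := by omega
  haveI : NeZero k := ⟨by omega⟩
  set μ : Measure ℤ := P.map (X 0) with hμ
  haveI hμprob : IsProbabilityMeasure μ := Measure.isProbabilityMeasure_map (hXmeas 0).aemeasurable
  set ν : Measure (Fin k → ℤ) := Measure.pi (fun _ : Fin k => μ) with hν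
  haveI hνprob : IsProbabilityMeasure ν := by infer_instance
  set V : Ω → (Fin k → ℤ) := fun ω i => X i ω with hV
  have hVmeas : Measurable V := measurable_pi_lambda _ (fun i => hXmeas i)
  have hmeasZ : ∀ A : Set ℤ, MeasurableSet A := fun A => A.to_countable.measurableSet
  have hmeasP : ∀ A : Set (Fin k → ℤ), MeasurableSet A := fun A => A.to_countable.measurableSet
  -- Step 1 : the law of the increment vector is the product measure
  have hmapV : P.map V = ν := by
    refine (Measure.pi_eq fun s _ => ?_).symm
    rw [Measure.map_apply hVmeas (hmeasP _)]
    set s' : ℕ → Set ℤ := fun i => if h : i < k then s ⟨i, h⟩ else Set.univ with hs'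
    have hpre : V ⁻¹' Set.univ.pi s = ⋂ i ∈ Finset.range k, X i ⁻¹' s' i := by
      ext ω
      simp only [Set.mem_preimage, Set.mem_pi, Set.mem_univ, forall_true_left,
        Set.mem_iInter, Finset.mem_range]
      constructor
      · intro h i hi
        simp only [s', dif_pos hi]
        exact h ⟨i, hi⟩
      · intro h i
        have := h i.val i.isLt
        simpa only [s', dif_pos i.isLt, Fin.eta] using this
    rw [hpre, (iIndepFun_iff_measure_inter_preimage_eq_mul.mp hindep) (Finset.range k)
      (sets := s') (fun i _ => hmeasZ _)]
    have heach : ∀ i, P (X i ⁻¹' s' i) = μ (s' i) := by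
      intro i
      rw [hμ, ← (hident i).map_eq, Measure.map_apply (hXmeas i) (hmeasZ _)]
    calc ∏ i ∈ Finset.range k, P (X i ⁻¹' s' i)
        = ∏ i ∈ Finset.range k, μ (s' i) := Finset.prod_congr rfl fun i _ => heach i
      _ = ∏ i : Fin k, μ (s' i.val) := (Fin.prod_univ_eq_prod_range (fun i => μ (s' i)) k).symm
      _ = ∏ i : Fin k, μ (s i) := by
          refine Finset.prod_congr rfl fun i _ => ?_
          simp only [s', dif_pos i.isLt, Fin.eta]
  -- Step 2 : rotation invariance of ν
  have hrotinv : ∀ (r : Fin k) (A : Set (Fin k → ℤ)), ν (rot r ⁻¹' A) = ν A := by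
    intro r A
    have mp := measurePreserving_piCongrLeft (fun _ : Fin k => μ) (Equiv.subRight r)
    have hfun : ⇑(MeasurableEquiv.piCongrLeft (fun _ : Fin k => ℤ) (Equiv.subRight r))
        = rot r := by
      funext x
      funext j
      have h1 := MeasurableEquiv.piCongrLeft_apply_apply (Equiv.subRight r)
        (β := fun _ : Fin k => ℤ) x (j + r)
      have h2 : Equiv.subRight r (j + r) = j := by
        simp [Equiv.subRight]
      rw [h2] at h1
      rw [h1]
      rfl
    rw [hfun] at mp
    exact mp.measure_preimage (hmeasP A).nullMeasurableSet
  -- Step 3 : identify the events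
  set A₀ : Set (Fin k → ℤ) := {x | good hk x} with hA₀
  set B : Set (Fin k → ℤ) := {x | T hk x k = -1} with hB
  have hTV : ∀ ω j, j ≤ k → T hk (V ω) j = ∑ i ∈ Finset.range j, X i ω := by
    intro ω j hj
    refine Finset.sum_congr rfl fun i hi => ?_
    have hik : i < k := lt_of_lt_of_le (Finset.mem_range.mp hi) hj
    show X ((⟨i % k, Nat.mod_lt i hk⟩ : Fin k) : ℕ) ω = X i ω
    simp [Nat.mod_eq_of_lt hik]
  have hE : {ω | (∀ i, 1 ≤ i → i < k → 0 < W i ω) ∧ W k ω = 0} = V ⁻¹' A₀ := by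
    ext ω
    simp only [Set.mem_setOf_eq, Set.mem_preimage, hA₀, good]
    constructor
    · rintro ⟨h1, h2⟩
      refine ⟨fun j hj1 hj2 => ?_, ?_⟩
      · rw [hTV ω j (le_of_lt hj2)]
        have := h1 j hj1 hj2
        rw [hW j ω] at this; omega
      · rw [hTV ω k le_rfl]
        rw [hW k ω] at h2; omega
    · rintro ⟨h1, h2⟩
      rw [hTV ω k le_rfl] at h2
      refine ⟨fun j hj1 hj2 => ?_, ?_⟩
      · have := h1 j hj1 hj2
        rw [hTV ω j (le_of_lt hj2)] at this
        rw [hW j ω]; omega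
      · rw [hW k ω]; omega
  have hEB : {ω | W k ω = 0} = V ⁻¹' B := by
    ext ω
    simp only [Set.mem_setOf_eq, Set.mem_preimage, hB]
    rw [hTV ω k le_rfl, hW k ω]
    omega
  -- Step 4 : partition of B by the rotated events
  set A : Fin k → Set (Fin k → ℤ) := fun r => rot r ⁻¹' A₀ with hA
  have hchar : ∀ (r : Fin k) (x : Fin k → ℤ),
      x ∈ A r ↔ (T hk x k = -1 ∧ c hk x r.val) := fun r x => good_rot_iff hk r x
  have hdisj : Pairwise (Function.onFun Disjoint A) := by
    intro r r' hne
    refine Set.disjoint_left.mpr fun x hx hx' => ?_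
    rw [hchar] at hx hx'
    exact hne (Fin.ext (c_unique hk x hx.1 r.isLt r'.isLt hx.2 hx'.2))
  have hcover : B = ⋃ r, A r := by
    ext x
    simp only [hB, Set.mem_setOf_eq, Set.mem_iUnion]
    constructor
    · intro hs
      obtain ⟨r, hr, hc⟩ := c_exists hk x hs
      exact ⟨⟨r, hr⟩, (hchar _ x).mpr ⟨hs, hc⟩⟩
    · rintro ⟨r, hr⟩
      exact ((hchar r x).mp hr).1
  have hνB : ν B = (k : ENNReal) * ν A₀ := by
    rw [hcover, measure_iUnion hdisj (fun r => hmeasP _)]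
    have : ∀ r : Fin k, ν (A r) = ν A₀ := fun r => hrotinv r A₀
    rw [tsum_fintype]
    simp only [this]
    simp [Finset.card_univ, mul_comm]
  -- Conclusion
  have hPE : P {ω | (∀ i, 1 ≤ i → i < k → 0 < W i ω) ∧ W k ω = 0} = ν A₀ := by
    rw [hE, ← hmapV, Measure.map_apply hVmeas (hmeasP _)]
  have hPB : P {ω | W k ω = 0} = ν B := by
    rw [hEB, ← hmapV, Measure.map_apply hVmeas (hmeasP _)]
  rw [hPE, hPB, hνB, ENNReal.toReal_mul]
  have hcast : ((k : ENNReal)).toReal = (k : ℝ) := by simp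
  rw [hcast]
  have hk0 : (k : ℝ) ≠ 0 := Nat.cast_ne_zero.mpr (by omega)
  field_simp
end

section
/- Let a ∈ (3/2, 5/2), κ = 1/(4a−2), c = −√π/(2Γ(3/2−a)), and define ν(k) = c·Γ(3/2−a+k)/Γ(3/2+k) for k ∈ ℤ\{0}, ν(0) = 0. Then ν(k) ≥ 0 for all k and Σ_{k∈ℤ} ν(k) = 1, i.e. ν is a probability measure on ℤ. -/
open Real Filter Topology

/-- Sign of Gamma at `x - n` for `x ∈ (0,1)`. -/
lemma aux_gamma_alt (x : ℝ) (h0 : 0 < x) (h1 : x < 1) : ∀ n : ℕ,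
    0 < (-1 : ℝ) ^ n * Real.Gamma (x - n) := by
  intro n
  induction n with
  | zero => simpa using Real.Gamma_pos_of_pos h0
  | succ n ih =>
    have hlt : x - (n + 1 : ℕ) < 0 := by
      push_cast; have : (0:ℝ) ≤ n := Nat.cast_nonneg n; linarith
    have hne : x - ((n:ℝ) + 1) ≠ 0 := by push_cast at hlt ⊢; linarith
    have hrec : Real.Gamma (x - n) = (x - ((n:ℝ) + 1)) * Real.Gamma (x - ((n:ℝ) + 1)) := by
      rw [show x - (n:ℝ) = (x - ((n:ℝ)+1)) + 1 by ring, Real.Gamma_add_one hne]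
    have hcancel : (-(x - ((n:ℝ) + 1)))⁻¹ * (x - ((n:ℝ) + 1)) = -1 := by
      rw [inv_neg, neg_mul, inv_mul_cancel₀ hne]
    have key : (-1 : ℝ) ^ (n + 1) * Real.Gamma (x - ((n:ℕ) + 1 : ℕ)) =
        (-(x - ((n:ℝ) + 1)))⁻¹ * ((-1 : ℝ) ^ n * Real.Gamma (x - n)) := by
      rw [hrec]; push_cast
      rw [pow_succ, show (-(x - ((n:ℝ) + 1)))⁻¹ * ((-1 : ℝ) ^ n * ((x - ((n:ℝ)+1)) * Real.Gamma (x - ((n:ℝ)+1)))) = ((-(x - ((n:ℝ) + 1)))⁻¹ * (x - ((n:ℝ) + 1))) * ((-1 : ℝ) ^ n * Real.Gamma (x - ((n:ℝ)+1))) from by ring, hcancel]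
      ring
    rw [key]
    have : (0:ℝ) < -(x - ((n:ℝ)+1)) := by push_cast at hlt; linarith
    exact mul_pos (inv_pos.2 this) ih

/-- Gamma doesn't vanish at `r + k` for `r ∈ (0,1)`, `k : ℤ`. -/
lemma aux_gamma_ne (r : ℝ) (h0 : 0 < r) (h1 : r < 1) (k : ℤ) :
    Real.Gamma (r + (k : ℝ)) ≠ 0 := by
  apply Real.Gamma_ne_zero
  intro m hm
  have h2 : ((-(m:ℤ) - k : ℤ) : ℝ) = r := by push_cast; linarith
  have h3 : (0:ℝ) < ((-(m:ℤ) - k : ℤ) : ℝ) := by rw [h2]; exact h0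
  have h4 : ((-(m:ℤ) - k : ℤ) : ℝ) < 1 := by rw [h2]; exact h1
  have h5 : (0:ℤ) < -(m:ℤ) - k := by exact_mod_cast h3
  have h6 : -(m:ℤ) - k < 1 := by exact_mod_cast h4
  omega

lemma aux_arg_ne (r : ℝ) (h0 : 0 < r) (h1 : r < 1) (k : ℤ) : r + (k : ℝ) ≠ 0 := by
  intro hm
  have h2 : ((-k : ℤ) : ℝ) = r := by push_cast; linarith
  have h5 : (0:ℤ) < -k := by exact_mod_cast (h2 ▸ h0 : (0:ℝ) < ((-k:ℤ):ℝ))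
  have h6 : (-k : ℤ) < 1 := by exact_mod_cast (h2 ▸ h1 : ((-k:ℤ):ℝ) < 1)
  omega

lemma aux_not_summable (r : ℝ) (h0 : 0 < r) (h2 : r ≤ 2) :
    ¬ Summable (fun n : ℕ => 1 / ((n:ℝ) + r)) := by
  intro h
  have h1 : Summable (fun n : ℕ => 1 / ((n:ℝ) + 2)) := by
    refine Summable.of_nonneg_of_le (fun n => by positivity) (fun n => ?_) h
    apply one_div_le_one_div_of_le
    · positivity
    · linarith
  have h3 : Summable (fun n : ℕ => 1 / (((n + 2 : ℕ)):ℝ)) := by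
    convert h1 using 2 with n
    push_cast; ring
  exact Real.not_summable_one_div_natCast ((summable_nat_add_iff 2).mp h3)

lemma aux_forces (C r : ℝ) (hC : 0 < C) (hr0 : 0 < r) (hr2 : r ≤ 2) (t : ℕ → ℝ)
    (ht : Summable t) (hle : ∀ n : ℕ, C / ((n:ℝ) + r) ≤ t n) : False := by
  have hs : Summable (fun n : ℕ => C / ((n:ℝ) + r)) :=
    Summable.of_nonneg_of_le (fun n => by positivity) hle ht
  have h2 := hs.mul_left C⁻¹
  have h3 : (fun n : ℕ => C⁻¹ * (C / ((n:ℝ) + r))) = fun n : ℕ => 1 / ((n:ℝ) + r) := by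
    funext n
    have hnr : (n:ℝ) + r ≠ 0 := by positivity
    field_simp
  rw [h3] at h2
  exact aux_not_summable r hr0 hr2 h2

set_option maxHeartbeats 2000000 in
/-- The special step law of Section 5: for `a ∈ (3/2, 5/2)`, `κ = 1/(4a−2)` and
`c = −√π/(2Γ(3/2−a))`, the sequence `ν(k) = c·Γ(3/2−a+k)/Γ(3/2+k)` for `k ≠ 0`
(and `ν(0) = 0`) is nonnegative and sums to `1`, i.e. defines a probability
measure on `ℤ`. -/
theorem special_nu_is_probability (a κ c : ℝ)
    (ha : 3 / 2 < a) (ha' : a < 5 / 2)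
    (hκ : κ = 1 / (4 * a - 2))
    (hc : c = -Real.sqrt Real.pi / (2 * Real.Gamma (3 / 2 - a)))
    (ν : ℤ → ℝ)
    (hν : ∀ k : ℤ, ν k =
      if k = 0 then 0
      else c * Real.Gamma (3 / 2 - a + (k : ℝ)) / Real.Gamma (3 / 2 + (k : ℝ))) :
    (∀ k : ℤ, 0 ≤ ν k) ∧ ∑' k : ℤ, ν k = 1 := by
  set b : ℝ := 3 / 2 - a with hb
  have hb0 : -1 < b := by rw [hb]; linarith
  have hb1 : b < 0 := by rw [hb]; linarith
  have hb10 : 0 < b + 1 := by linarith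
  have hb11 : b + 1 < 1 := by linarith
  have ha1 : 0 < a - 1 := by linarith
  have hpi : 0 < Real.sqrt Real.pi := Real.sqrt_pos.2 Real.pi_pos
  have hΓhalf : Real.Gamma (1 / 2) = Real.sqrt Real.pi := Real.Gamma_one_half_eq
  have hΓb1pos : 0 < Real.Gamma (b + 1) := Real.Gamma_pos_of_pos hb10
  have hbne : b ≠ 0 := ne_of_lt hb1
  have hΓrec : Real.Gamma (b + 1) = b * Real.Gamma b := Real.Gamma_add_one hbne
  have hΓb_neg : Real.Gamma b < 0 := by nlinarith
  have hΓb_ne : Real.Gamma b ≠ 0 := ne_of_lt hΓb_neg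
  have hcpos : 0 < c := by
    rw [hc]
    apply div_pos_iff.2
    right
    constructor <;> nlinarith
  -- non-vanishing of the Gammas involved
  have hgb_ne : ∀ k : ℤ, Real.Gamma (b + (k : ℝ)) ≠ 0 := by
    intro k
    have := aux_gamma_ne (b + 1) hb10 hb11 (k - 1)
    rwa [show (b + 1) + ((k - 1 : ℤ) : ℝ) = b + (k : ℝ) by push_cast; ring] at this
  have hgh_ne : ∀ k : ℤ, Real.Gamma (1 / 2 + (k : ℝ)) ≠ 0 := fun k =>
    aux_gamma_ne (1 / 2) (by norm_num) (by norm_num) k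
  have hab_ne : ∀ k : ℤ, b + (k : ℝ) ≠ 0 := by
    intro k
    have := aux_arg_ne (b + 1) hb10 hb11 (k - 1)
    rwa [show (b + 1) + ((k - 1 : ℤ) : ℝ) = b + (k : ℝ) by push_cast; ring] at this
  have hah_ne : ∀ k : ℤ, 1 / 2 + (k : ℝ) ≠ 0 := fun k =>
    aux_arg_ne (1 / 2) (by norm_num) (by norm_num) k
  -- Gamma recurrence at 3/2 + k
  have hg3 : ∀ k : ℤ, Real.Gamma (3 / 2 + (k : ℝ)) =
      (1 / 2 + (k : ℝ)) * Real.Gamma (1 / 2 + (k : ℝ)) := by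
    intro k
    rw [show (3 : ℝ) / 2 + (k : ℝ) = (1 / 2 + (k : ℝ)) + 1 by ring,
      Real.Gamma_add_one (hah_ne k)]
  have hg3_ne : ∀ k : ℤ, Real.Gamma (3 / 2 + (k : ℝ)) ≠ 0 := by
    intro k
    rw [hg3 k]
    exact mul_ne_zero (hah_ne k) (hgh_ne k)
  -- the telescoping function F
  set F : ℤ → ℝ := fun k => Real.Gamma (b + (k : ℝ)) / Real.Gamma (1 / 2 + (k : ℝ)) with hF
  have hgb_rec : ∀ k : ℤ, Real.Gamma (b + ((k : ℝ) + 1)) =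
      (b + (k : ℝ)) * Real.Gamma (b + (k : ℝ)) := by
    intro k
    rw [show b + ((k : ℝ) + 1) = (b + (k : ℝ)) + 1 by ring, Real.Gamma_add_one (hab_ne k)]
  have hkey0 : ∀ k : ℤ, F k - F (k + 1) =
      Real.Gamma (b + (k : ℝ)) / Real.Gamma (3 / 2 + (k : ℝ)) * (1 / 2 - b) := by
    intro k
    have eFk : F k = ((1 / 2 + (k : ℝ)) * Real.Gamma (b + (k : ℝ))) /
        Real.Gamma (3 / 2 + (k : ℝ)) := by
      simp only [hF]
      rw [hg3 k, mul_div_mul_left _ _ (hah_ne k)]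
    have eFk1 : F (k + 1) = ((b + (k : ℝ)) * Real.Gamma (b + (k : ℝ))) /
        Real.Gamma (3 / 2 + (k : ℝ)) := by
      simp only [hF]
      push_cast
      rw [hgb_rec k, show (1:ℝ)/2 + ((k:ℝ)+1) = 3/2 + (k:ℝ) by ring]
    rw [eFk, eFk1]
    ring
  have hkey : ∀ k : ℤ, c * Real.Gamma (3 / 2 - a + (k : ℝ)) / Real.Gamma (3 / 2 + (k : ℝ)) =
      c / (a - 1) * (F k - F (k + 1)) := by
    intro k
    have h2 : a - 1 ≠ 0 := ne_of_gt ha1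
    have haux : ∀ Y : ℝ, c / (a - 1) * (Y * (a - 1)) = c * Y := by
      intro Y; field_simp
    rw [hkey0 k, ← hb, show (1:ℝ)/2 - b = a - 1 by rw [hb]; ring, haux, mul_div_assoc]
  -- strict positivity of the summand away from 0
  have hpos : ∀ k : ℤ, k ≠ 0 →
      0 < c * Real.Gamma (b + (k : ℝ)) / Real.Gamma (3 / 2 + (k : ℝ)) := by
    intro k hk
    obtain ⟨n, rfl | rfl⟩ := Int.eq_nat_or_neg k
    · -- k = n ≥ 1
      have hn : 1 ≤ n := by
        rcases Nat.eq_zero_or_pos n with h | h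
        · exact absurd (by simp [h]) hk
        · exact h
      have hn1 : (1:ℝ) ≤ (n:ℝ) := by exact_mod_cast hn
      have h1 : 0 < Real.Gamma (b + ((n:ℤ) : ℝ)) := by
        apply Real.Gamma_pos_of_pos; push_cast; linarith
      have h2 : 0 < Real.Gamma (3 / 2 + ((n:ℤ) : ℝ)) := by
        apply Real.Gamma_pos_of_pos; push_cast; linarith
      exact div_pos (mul_pos hcpos h1) h2
    · -- k = -n, n ≥ 1
      have hn : 1 ≤ n := by
        rcases Nat.eq_zero_or_pos n with h | h
        · exact absurd (by simp [h]) hk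
        · exact h
      obtain ⟨m, rfl⟩ := Nat.exists_eq_add_of_le hn
      have e1 : b + ((-(1 + m : ℕ) : ℤ) : ℝ) = (b + 1) - ((m + 2 : ℕ) : ℝ) := by
        push_cast; ring
      have e2 : (3:ℝ) / 2 + ((-(1 + m : ℕ) : ℤ) : ℝ) = 1 / 2 - ((m : ℕ) : ℝ) := by
        push_cast; ring
      rw [e1, e2]
      have hA := aux_gamma_alt (b + 1) hb10 hb11 (m + 2)
      have hB := aux_gamma_alt (1 / 2) (by norm_num) (by norm_num) m
      have hpow : ((-1:ℝ) ^ (m + 2)) * ((-1:ℝ) ^ m) = 1 := by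
        rw [← pow_add]; exact Even.neg_one_pow ⟨m + 1, by ring⟩
      have hmul : 0 < Real.Gamma ((b + 1) - ((m + 2 : ℕ) : ℝ)) *
          Real.Gamma (1 / 2 - ((m : ℕ) : ℝ)) := by
        have h := mul_pos hA hB
        have e : ((-1:ℝ) ^ (m + 2) * Real.Gamma ((b + 1) - ((m + 2 : ℕ) : ℝ))) *
            ((-1:ℝ) ^ m * Real.Gamma (1 / 2 - ((m : ℕ) : ℝ))) =
            (((-1:ℝ) ^ (m + 2)) * ((-1:ℝ) ^ m)) *
            (Real.Gamma ((b + 1) - ((m + 2 : ℕ) : ℝ)) *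
              Real.Gamma (1 / 2 - ((m : ℕ) : ℝ))) := by ring
        rw [e, hpow, one_mul] at h
        exact h
      rcases mul_pos_iff.1 hmul with ⟨h1, h2⟩ | ⟨h1, h2⟩
      · exact div_pos (mul_pos hcpos h1) h2
      · exact div_pos_iff.2 (Or.inr ⟨mul_neg_of_pos_of_neg hcpos h1, h2⟩)
  have hnonneg : ∀ k : ℤ, 0 ≤ ν k := by
    intro k
    rcases eq_or_ne k 0 with rfl | hk
    · rw [hν 0, if_pos rfl]
    · rw [hν k, if_neg hk]
      exact (hpos k hk).le
  -- ## positive side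
  obtain ⟨g, hgdef⟩ : ∃ g : ℕ → ℝ, g = fun n : ℕ => c / (a - 1) * F ((n:ℤ) + 1) :=
    ⟨_, rfl⟩
  have hne1 : ∀ n : ℕ, ((n:ℤ) + 1) ≠ 0 := by intro n; omega
  have htg : ∀ n : ℕ, ν ((n:ℤ) + 1) = g n - g (n + 1) := by
    intro n
    rw [hν, if_neg (hne1 n), hkey ((n:ℤ) + 1)]
    simp only [hgdef]
    rw [show ((n:ℤ) + 1) + 1 = (((n + 1 : ℕ)):ℤ) + 1 by push_cast; ring]
    ring
  have hgpos : ∀ n : ℕ, 0 < g n := by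
    intro n
    simp only [hgdef, hF]
    have hxn : (0:ℝ) ≤ (n:ℝ) := Nat.cast_nonneg n
    have h1 : 0 < Real.Gamma (b + (((n:ℤ) + 1 : ℤ) : ℝ)) := by
      apply Real.Gamma_pos_of_pos; push_cast; linarith
    have h2 : 0 < Real.Gamma (1 / 2 + (((n:ℤ) + 1 : ℤ) : ℝ)) := by
      apply Real.Gamma_pos_of_pos; push_cast; linarith
    exact mul_pos (div_pos hcpos ha1) (div_pos h1 h2)
  have hps : ∀ N : ℕ, ∑ i ∈ Finset.range N, ν ((i:ℤ) + 1) = g 0 - g N := by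
    intro N
    rw [Finset.sum_congr rfl fun i _ => htg i]
    exact Finset.sum_range_sub' g N
  have hsum_t : Summable (fun n : ℕ => ν ((n:ℤ) + 1)) := by
    apply summable_of_sum_range_le (c := g 0) (fun n => hnonneg _)
    intro N
    rw [hps N]
    have := hgpos N
    linarith
  have hhs := hsum_t.hasSum
  have htendS := hhs.tendsto_sum_nat
  have hgtend : Tendsto g atTop (𝓝 (g 0 - ∑' n : ℕ, ν ((n:ℤ) + 1))) := by
    have h1 : Tendsto (fun N => g 0 - ∑ i ∈ Finset.range N, ν ((i:ℤ) + 1)) atTop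
        (𝓝 (g 0 - ∑' n : ℕ, ν ((n:ℤ) + 1))) := tendsto_const_nhds.sub htendS
    have h2 : (fun N => g 0 - ∑ i ∈ Finset.range N, ν ((i:ℤ) + 1)) = g := by
      funext N; rw [hps N]; ring
    rwa [h2] at h1
  have hganti : Antitone g := by
    apply antitone_nat_of_succ_le
    intro n
    have := hnonneg ((n:ℤ) + 1)
    rw [htg n] at this
    linarith
  have hLgen : ∀ n : ℕ, g 0 - (∑' n : ℕ, ν ((n:ℤ) + 1)) ≤ g n := by
    intro n
    apply le_of_tendsto hgtend
    filter_upwards [eventually_ge_atTop n] with m hm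
    exact hganti hm
  have hL0 : 0 ≤ g 0 - ∑' n : ℕ, ν ((n:ℤ) + 1) :=
    ge_of_tendsto hgtend (Filter.Eventually.of_forall fun n => (hgpos n).le)
  have ht2 : ∀ n : ℕ, ν ((n:ℤ) + 1) = (a - 1) * g n / ((n:ℝ) + 3 / 2) := by
    intro n
    rw [hν, if_neg (hne1 n), hg3 ((n:ℤ) + 1)]
    simp only [hgdef, hF]
    have h1 := hgh_ne ((n:ℤ) + 1)
    have h2 := hah_ne ((n:ℤ) + 1)
    have h3 : a - 1 ≠ 0 := ne_of_gt ha1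
    have h4 : (n:ℝ) + 3 / 2 ≠ 0 := by positivity
    push_cast at h1 h2 ⊢
    field_simp
    ring
  have hSg0 : ∑' n : ℕ, ν ((n:ℤ) + 1) = g 0 := by
    by_contra hne
    have hLpos : 0 < g 0 - ∑' n : ℕ, ν ((n:ℤ) + 1) := by
      rcases lt_or_eq_of_le hL0 with h | h
      · exact h
      · exact absurd h.symm (by intro hh; exact hne (by linarith))
    apply aux_forces ((a - 1) * (g 0 - ∑' n : ℕ, ν ((n:ℤ) + 1))) (3 / 2)
      (by positivity) (by norm_num) (by norm_num) _ hsum_t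
    intro n
    rw [ht2 n]
    gcongr
    exact hLgen n
  have hnat : HasSum (fun n : ℕ => ν (n:ℤ)) (g 0 + 0) := by
    have hhs1 : HasSum (fun n : ℕ => ν ((n:ℤ) + 1)) (g 0) := hSg0 ▸ hhs
    have hca : (fun n : ℕ => ν (((n + 1 : ℕ)):ℤ)) = fun n : ℕ => ν ((n:ℤ) + 1) := by
      funext n; norm_num
    have h5 := (hasSum_nat_add_iff (f := fun n : ℕ => ν (n:ℤ)) 1).mp (by rw [hca]; exact hhs1)
    simpa [hν 0] using h5
  -- ## negative side
  obtain ⟨q, hqdef⟩ : ∃ q : ℕ → ℝ, q = fun n : ℕ => c / (a - 1) * F (-(n:ℤ)) :=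
    ⟨_, rfl⟩
  have hne2 : ∀ n : ℕ, (-(n:ℤ) - 1) ≠ 0 := by intro n; omega
  have huq : ∀ n : ℕ, ν (-(n:ℤ) - 1) = q (n + 1) - q n := by
    intro n
    rw [hν, if_neg (hne2 n), hkey (-(n:ℤ) - 1)]
    simp only [hqdef]
    rw [show -(n:ℤ) - 1 + 1 = -(n:ℤ) by ring,
      show -(((n + 1 : ℕ)):ℤ) = -(n:ℤ) - 1 by push_cast; ring]
    ring
  have hqneg : ∀ n : ℕ, q n < 0 := by
    intro n
    simp only [hqdef, hF]
    have e1 : b + ((-(n:ℤ) : ℤ) : ℝ) = (b + 1) - ((n + 1 : ℕ) : ℝ) := by push_cast; ring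
    have e2 : (1:ℝ) / 2 + ((-(n:ℤ) : ℤ) : ℝ) = 1 / 2 - ((n : ℕ) : ℝ) := by push_cast; ring
    rw [e1, e2]
    have hA := aux_gamma_alt (b + 1) hb10 hb11 (n + 1)
    have hB := aux_gamma_alt (1 / 2) (by norm_num) (by norm_num) n
    have hpow : ((-1:ℝ) ^ (n + 1)) * ((-1:ℝ) ^ n) = -1 := by
      rw [← pow_add]; exact Odd.neg_one_pow ⟨n, by ring⟩
    have hmul : Real.Gamma ((b + 1) - ((n + 1 : ℕ) : ℝ)) *
        Real.Gamma (1 / 2 - ((n : ℕ) : ℝ)) < 0 := by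
      have h := mul_pos hA hB
      have e : ((-1:ℝ) ^ (n + 1) * Real.Gamma ((b + 1) - ((n + 1 : ℕ) : ℝ))) *
          ((-1:ℝ) ^ n * Real.Gamma (1 / 2 - ((n : ℕ) : ℝ))) =
          (((-1:ℝ) ^ (n + 1)) * ((-1:ℝ) ^ n)) *
          (Real.Gamma ((b + 1) - ((n + 1 : ℕ) : ℝ)) *
            Real.Gamma (1 / 2 - ((n : ℕ) : ℝ))) := by ring
      rw [e, hpow] at h
      linarith
    have hdivneg : Real.Gamma ((b + 1) - ((n + 1 : ℕ) : ℝ)) /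
        Real.Gamma (1 / 2 - ((n : ℕ) : ℝ)) < 0 := by
      rcases mul_neg_iff.1 hmul with ⟨h1, h2⟩ | ⟨h1, h2⟩
      · exact div_neg_of_pos_of_neg h1 h2
      · exact div_neg_of_neg_of_pos h1 h2
    exact mul_neg_of_pos_of_neg (div_pos hcpos ha1) hdivneg
  have hpq : ∀ N : ℕ, ∑ i ∈ Finset.range N, ν (-(i:ℤ) - 1) = q N - q 0 := by
    intro N
    rw [Finset.sum_congr rfl fun i _ => huq i]
    exact Finset.sum_range_sub q N
  have hsum_u : Summable (fun n : ℕ => ν (-(n:ℤ) - 1)) := by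
    apply summable_of_sum_range_le (c := -q 0) (fun n => hnonneg _)
    intro N
    rw [hpq N]
    have := hqneg N
    linarith
  have hhsu := hsum_u.hasSum
  have htendS' := hhsu.tendsto_sum_nat
  have hqtend : Tendsto q atTop (𝓝 ((∑' n : ℕ, ν (-(n:ℤ) - 1)) + q 0)) := by
    have h1 : Tendsto (fun N => (∑ i ∈ Finset.range N, ν (-(i:ℤ) - 1)) + q 0) atTop
        (𝓝 ((∑' n : ℕ, ν (-(n:ℤ) - 1)) + q 0)) := htendS'.add_const (q 0)
    have h2 : (fun N => (∑ i ∈ Finset.range N, ν (-(i:ℤ) - 1)) + q 0) = q := by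
      funext N; rw [hpq N]; ring
    rwa [h2] at h1
  have hqmono : Monotone q := by
    apply monotone_nat_of_le_succ
    intro n
    have := hnonneg (-(n:ℤ) - 1)
    rw [huq n] at this
    linarith
  have hLgen' : ∀ n : ℕ, q n ≤ (∑' n : ℕ, ν (-(n:ℤ) - 1)) + q 0 := by
    intro n
    apply ge_of_tendsto hqtend
    filter_upwards [eventually_ge_atTop n] with m hm
    exact hqmono hm
  have hL0' : (∑' n : ℕ, ν (-(n:ℤ) - 1)) + q 0 ≤ 0 :=
    le_of_tendsto hqtend (Filter.Eventually.of_forall fun n => (hqneg n).le)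
  have hu2 : ∀ n : ℕ, ν (-(n:ℤ) - 1) = -((a - 1) * q (n + 1)) / ((n:ℝ) + 1 / 2) := by
    intro n
    rw [hν, if_neg (hne2 n), hg3 (-(n:ℤ) - 1)]
    simp only [hqdef, hF]
    have h1 := hgh_ne (-(n:ℤ) - 1)
    have h2 := hah_ne (-(n:ℤ) - 1)
    have h3 : a - 1 ≠ 0 := ne_of_gt ha1
    have h4 : (n:ℝ) + 1 / 2 ≠ 0 := by positivity
    have e3 : -(((n + 1 : ℕ)):ℤ) = -(n:ℤ) - 1 := by push_cast; ring
    rw [e3]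
    push_cast at h1 h2 ⊢
    rw [show (1:ℝ) / 2 + (-(n:ℝ) - 1) = -((n:ℝ) + 1/2) by ring] at h1 h2 ⊢
    have key : ∀ X Y : ℝ, Y ≠ 0 → c * X / (-((n:ℝ) + 1/2) * Y) =
        -((a - 1) * (c / (a - 1) * (X / Y))) / ((n:ℝ) + 1/2) := by
      intro X Y hY
      have e4 : (a - 1) * (c / (a - 1) * (X / Y)) = c * (X / Y) := by
        field_simp
      rw [e4, neg_mul, div_neg, div_mul_eq_div_div_swap, mul_div_assoc, neg_div]
    exact key _ _ h1
  have hSq0 : ∑' n : ℕ, ν (-(n:ℤ) - 1) = -q 0 := by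
    by_contra hne
    have hLneg : (∑' n : ℕ, ν (-(n:ℤ) - 1)) + q 0 < 0 := by
      rcases lt_or_eq_of_le hL0' with h | h
      · exact h
      · exact absurd h (by intro hh; exact hne (by linarith))
    apply aux_forces ((a - 1) * (-((∑' n : ℕ, ν (-(n:ℤ) - 1)) + q 0))) (1 / 2)
      (mul_pos ha1 (by linarith)) (by norm_num) (by norm_num) _ hsum_u
    intro n
    rw [hu2 n]
    gcongr
    nlinarith [hLgen' (n + 1)]
  have hneg : HasSum (fun n : ℕ => ν (-((n:ℤ) + 1))) (-q 0) := by
    have h1 : HasSum (fun n : ℕ => ν (-(n:ℤ) - 1)) (-q 0) := hSq0 ▸ hhsu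
    have h2 : (fun n : ℕ => ν (-((n:ℤ) + 1))) = fun n : ℕ => ν (-(n:ℤ) - 1) := by
      funext n; congr 1; ring
    rwa [h2]
  -- ## assembly
  have htotal : HasSum ν ((g 0 + 0) + -q 0) := hnat.of_nat_of_neg_add_one hneg
  refine ⟨hnonneg, ?_⟩
  rw [htotal.tsum_eq]
  have hF1 : F 1 = b * Real.Gamma b / (1 / 2 * Real.sqrt Real.pi) := by
    simp only [hF]
    rw [show ((1:ℤ):ℝ) = 1 by norm_num, ← hΓrec,
      show (1:ℝ) / 2 + 1 = (1 / 2) + 1 by norm_num,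
      Real.Gamma_add_one (by norm_num : (1:ℝ)/2 ≠ 0), hΓhalf]
  have hF0 : F 0 = Real.Gamma b / Real.sqrt Real.pi := by
    simp only [hF]
    norm_num [hΓhalf]
  have hg0 : g 0 = c / (a - 1) * F 1 := by
    simp only [hgdef]; norm_num
  have hq0 : q 0 = c / (a - 1) * F 0 := by
    simp only [hqdef]; norm_num
  rw [hg0, hq0, hF1, hF0, hc]
  rw [hb]
  have h1 : Real.Gamma (3 / 2 - a) ≠ 0 := by rw [← hb]; exact hΓb_ne
  have h2 : a - 1 ≠ 0 := ne_of_gt ha1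
  have hD : Real.sqrt Real.pi * a * Real.Gamma (3 / 2 - a) * 2 -
      Real.sqrt Real.pi * Real.Gamma (3 / 2 - a) * 2 ≠ 0 := by
    rw [show Real.sqrt Real.pi * a * Real.Gamma (3 / 2 - a) * 2 -
        Real.sqrt Real.pi * Real.Gamma (3 / 2 - a) * 2 =
        2 * Real.sqrt Real.pi * Real.Gamma (3 / 2 - a) * (a - 1) by ring]
    exact mul_ne_zero (mul_ne_zero (mul_ne_zero two_ne_zero hpi.ne') h1) h2
  field_simp
  rw [show ((3:ℝ) - 2 * a) / 2 = 3 / 2 - a by ring]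
  simp only [mul_div_assoc, div_self h1]
  ring
end

section
/- Let ν be the measure on ℤ given by ν(k) = c·Γ(3/2−a+k)/Γ(3/2+k)·1_{k≠0} with c = −√π/(2Γ(3/2−a)) and a ∈ (3/2, 5/2). Then the function h↑(ℓ) = 2ℓ·4^{−ℓ}·C(2ℓ,ℓ) (extended by 0 to ℤ_{≤0}) is ν-harmonic on ℤ_{>0}: for every ℓ > 0, Σ_{k∈ℤ} h↑(ℓ+k)·ν(k) = h↑(ℓ). -/
open Filter Topology Finset

open Filter Topology Finset

lemma between_ne_neg_nat {x : ℝ} {k : ℤ} (h1 : (k:ℝ) < x) (h2 : x < k + 1) :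
    ∀ m : ℕ, x ≠ -m := by
  intro m hm
  rw [hm] at h1 h2
  have h1' : (k:ℤ) < -(m:ℤ) := by exact_mod_cast h1
  have h2' : -(m:ℤ) < k + 1 := by exact_mod_cast h2
  omega

lemma Gamma_prod (x : ℝ) (hx : ∀ m : ℕ, x ≠ -m) (n : ℕ) :
    Real.Gamma (x + n) = Real.Gamma x * ∏ j ∈ Finset.range n, (x + j) := by
  induction n with
  | zero => simp
  | succ n ih =>
    have hxn : x + n ≠ 0 := by
      have h := hx n
      intro h0
      exact h (by linarith)
    rw [Finset.prod_range_succ, show x + ((n+1 : ℕ):ℝ) = (x + n) + 1 by push_cast; ring,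
      Real.Gamma_add_one hxn, ih]
    ring

lemma tendsto_gamma_fact (x : ℝ) (hx : ∀ m : ℕ, x ≠ -m) :
    Tendsto (fun n : ℕ => Real.Gamma (x + n + 1) / (n.factorial * (n:ℝ) ^ x)) atTop (𝓝 1) := by
  have hΓ : Real.Gamma x ≠ 0 := Real.Gamma_ne_zero hx
  have h0 : Tendsto (fun n : ℕ => Real.Gamma x / Real.GammaSeq x n) atTop (𝓝 1) := by
    have h := (tendsto_const_nhds (x := Real.Gamma x) (f := atTop (α := ℕ))).div
      (Real.GammaSeq_tendsto_Gamma x) hΓ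
    simpa [Pi.div_def, div_self hΓ] using h
  refine h0.congr' ?_
  filter_upwards [eventually_ge_atTop 1] with n hn
  have hnpos : (0:ℝ) < n := by exact_mod_cast hn
  have hprod : ∏ j ∈ Finset.range (n+1), (x + (j:ℝ)) = Real.Gamma (x + n + 1) / Real.Gamma x := by
    rw [show x + (n:ℝ) + 1 = x + ((n+1 : ℕ):ℝ) by push_cast; ring, Gamma_prod x hx (n+1)]
    field_simp
  have h1 : Real.Gamma (x + n + 1) ≠ 0 := by
    apply Real.Gamma_ne_zero
    intro m hm
    exact hx (m + n + 1) (by push_cast at hm ⊢; linarith)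
  have h2 : ((n.factorial : ℝ)) ≠ 0 := by exact_mod_cast n.factorial_ne_zero
  have h3 : (n:ℝ) ^ x ≠ 0 := (Real.rpow_pos_of_pos hnpos x).ne'
  rw [Real.GammaSeq, hprod]
  field_simp

lemma tendsto_gamma_ratio (x y : ℝ) (hx : ∀ m : ℕ, x ≠ -m) (hy : ∀ m : ℕ, y ≠ -m) :
    Tendsto (fun n : ℕ => Real.Gamma (x + n + 1) / Real.Gamma (y + n + 1) * (n:ℝ) ^ (y - x))
      atTop (𝓝 1) := by
  have h := (tendsto_gamma_fact x hx).div (tendsto_gamma_fact y hy) one_ne_zero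
  rw [div_one] at h
  refine h.congr' ?_
  filter_upwards [eventually_ge_atTop 1] with n hn
  have hnpos : (0:ℝ) < n := by exact_mod_cast hn
  have hy1 : Real.Gamma (y + n + 1) ≠ 0 := by
    apply Real.Gamma_ne_zero
    intro m hm
    exact hy (m + n + 1) (by push_cast at hm ⊢; linarith)
  have h2 : ((n.factorial : ℝ)) ≠ 0 := by exact_mod_cast n.factorial_ne_zero
  have h3 : (n:ℝ) ^ x ≠ 0 := (Real.rpow_pos_of_pos hnpos x).ne'
  have h4 : (n:ℝ) ^ y ≠ 0 := (Real.rpow_pos_of_pos hnpos y).ne'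
  simp only [Pi.div_apply]
  rw [Real.rpow_sub hnpos]
  field_simp

/-- `h↑(ℓ) = 2ℓ · 4^{-ℓ} · C(2ℓ,ℓ)`, extended by `0` on nonpositive integers. -/
noncomputable def hupZ (ℓ : ℤ) : ℝ :=
  if 0 < ℓ then 2 * ℓ * ((4:ℝ) ^ ℓ.toNat)⁻¹ * (Nat.choose (2 * ℓ.toNat) ℓ.toNat) else 0

noncomputable def uuu (a : ℝ) (ℓ n : ℕ) : ℝ :=
  Real.Gamma ((n:ℝ) + 3/2) * Real.Gamma ((n:ℝ) + 5/2 - a - ℓ) /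
    ((n.factorial : ℝ) * Real.Gamma ((n:ℝ) + 5/2 - ℓ))

noncomputable def TT (a : ℝ) (ℓ n : ℕ) : ℝ :=
  (n:ℝ) * ((n:ℝ) + 1/2) * Real.Gamma ((n:ℝ) + 1/2) * Real.Gamma ((n:ℝ) + 3/2 - a - ℓ) /
    ((n.factorial : ℝ) * Real.Gamma ((n:ℝ) + 3/2 - ℓ))

variable {a : ℝ}

lemma gamma_C_ne (ℓ n : ℕ) : Real.Gamma ((n:ℝ) + 3/2 - ℓ) ≠ 0 :=
  Real.Gamma_ne_zero (between_ne_neg_nat (k := (n:ℤ) + 1 - ℓ)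
    (by push_cast; linarith) (by push_cast; linarith))

set_option maxHeartbeats 2000000 in
lemma key_pointwise (ha : 3/2 < a) (ha' : a < 5/2) (ℓ n : ℕ) :
    (ℓ:ℝ) * uuu a ℓ n + (3/2 - a - ℓ) * uuu a (ℓ+1) n = TT a ℓ (n+1) - TT a ℓ n := by
  have hAne : (n:ℝ) + 1/2 ≠ 0 := by positivity
  have hA : Real.Gamma ((n:ℝ) + 3/2) = ((n:ℝ) + 1/2) * Real.Gamma ((n:ℝ) + 1/2) := by
    rw [show (n:ℝ) + 3/2 = ((n:ℝ) + 1/2) + 1 by ring, Real.Gamma_add_one hAne]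
  have hBne : (n:ℝ) + 3/2 - a - ℓ ≠ 0 := by
    intro h
    have h2 : (0:ℝ) < (n:ℝ) - ℓ := by linarith
    have h3 : (n:ℝ) - (ℓ:ℝ) < 1 := by linarith
    have h2' : (0:ℤ) < (n:ℤ) - ℓ := by exact_mod_cast h2
    have h3' : (n:ℤ) - (ℓ:ℤ) < 1 := by exact_mod_cast h3
    omega
  have hB : Real.Gamma ((n:ℝ) + 5/2 - a - ℓ)
      = ((n:ℝ) + 3/2 - a - ℓ) * Real.Gamma ((n:ℝ) + 3/2 - a - ℓ) := by
    rw [show (n:ℝ) + 5/2 - a - ℓ = ((n:ℝ) + 3/2 - a - ℓ) + 1 by ring, Real.Gamma_add_one hBne]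
  have hCne : (n:ℝ) + 3/2 - ℓ ≠ 0 := by
    intro h
    have h1 : ((2*n + 3 : ℤ) : ℝ) = ((2*ℓ : ℤ):ℝ) := by push_cast; linarith
    have h2 : (2*n + 3 : ℤ) = 2*ℓ := by exact_mod_cast h1
    omega
  have hC : Real.Gamma ((n:ℝ) + 5/2 - ℓ)
      = ((n:ℝ) + 3/2 - ℓ) * Real.Gamma ((n:ℝ) + 3/2 - ℓ) := by
    rw [show (n:ℝ) + 5/2 - ℓ = ((n:ℝ) + 3/2 - ℓ) + 1 by ring, Real.Gamma_add_one hCne]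
  have hΓC := gamma_C_ne ℓ n
  have hfact : ((n.factorial : ℝ)) ≠ 0 := by exact_mod_cast n.factorial_ne_zero
  simp only [uuu, TT, Nat.cast_add, Nat.cast_one, Nat.factorial_succ, Nat.cast_mul]
  rw [show (n:ℝ) + 5/2 - a - ((ℓ:ℝ) + 1) = (n:ℝ) + 3/2 - a - ℓ by ring,
      show (n:ℝ) + 5/2 - ((ℓ:ℝ) + 1) = (n:ℝ) + 3/2 - ℓ by ring,
      show (n:ℝ) + 1 + 1/2 = (n:ℝ) + 3/2 by ring,
      show (n:ℝ) + 1 + 3/2 - a - (ℓ:ℝ) = (n:ℝ) + 5/2 - a - ℓ by ring,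
      show (n:ℝ) + 1 + 3/2 - (ℓ:ℝ) = (n:ℝ) + 5/2 - ℓ by ring,
      hA, hB, hC]
  have hn1 : ((n:ℝ) + 1) ≠ 0 := by positivity
  have hDa : (n.factorial : ℝ) * (((n:ℝ) + 3/2 - ℓ) * Real.Gamma ((n:ℝ) + 3/2 - ℓ)) ≠ 0 :=
    mul_ne_zero hfact (mul_ne_zero hCne hΓC)
  have hDb : (n.factorial : ℝ) * Real.Gamma ((n:ℝ) + 3/2 - ℓ) ≠ 0 := mul_ne_zero hfact hΓC
  have hDc : (((n:ℝ) + 1) * n.factorial) * (((n:ℝ) + 3/2 - ℓ) * Real.Gamma ((n:ℝ) + 3/2 - ℓ)) ≠ 0 :=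
    mul_ne_zero (mul_ne_zero hn1 hfact) (mul_ne_zero hCne hΓC)
  rw [← mul_div_assoc, ← mul_div_assoc, div_add_div _ _ hDa hDb, div_sub_div _ _ hDc hDb,
    div_eq_div_iff (mul_ne_zero hDa hDb) (mul_ne_zero hDc hDb)]
  ring

lemma tendsto_uuu_mul (ha : 3/2 < a) (ha' : a < 5/2) (ℓ : ℕ) :
    Tendsto (fun n : ℕ => uuu a ℓ n * (n:ℝ) ^ (a - 1/2)) atTop (𝓝 1) := by
  have f1 := tendsto_gamma_fact (1/2) (between_ne_neg_nat (k := 0) (by norm_num) (by norm_num))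
  have f2 := tendsto_gamma_ratio (3/2 - a - ℓ) (3/2 - ℓ)
    (between_ne_neg_nat (k := -1 - ℓ) (by push_cast; linarith) (by push_cast; linarith))
    (between_ne_neg_nat (k := 1 - ℓ) (by push_cast; linarith) (by push_cast; linarith))
  have h := f1.mul f2
  rw [mul_one] at h
  refine h.congr' ?_
  filter_upwards [eventually_ge_atTop 1] with n hn
  have hnpos : (0:ℝ) < n := by exact_mod_cast hn
  have hfact : ((n.factorial : ℝ)) ≠ 0 := by exact_mod_cast n.factorial_ne_zero
  have hΓ : Real.Gamma (3/2 - (ℓ:ℝ) + n + 1) ≠ 0 := by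
    rw [show (3/2 - (ℓ:ℝ) + n + 1) = (n:ℝ) + 5/2 - ℓ by ring]
    exact Real.Gamma_ne_zero (between_ne_neg_nat (k := (n:ℤ) + 2 - ℓ)
      (by push_cast; linarith) (by push_cast; linarith))
  have h3 : (n:ℝ) ^ ((1:ℝ)/2) ≠ 0 := (Real.rpow_pos_of_pos hnpos _).ne'
  rw [show (1/2 : ℝ) + n + 1 = (n:ℝ) + 3/2 by ring,
      show (3/2 - a - (ℓ:ℝ)) + n + 1 = (n:ℝ) + 5/2 - a - ℓ by ring,
      show (3/2 - (ℓ:ℝ)) + n + 1 = (n:ℝ) + 5/2 - ℓ by ring,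
      show (3/2 - (ℓ:ℝ)) - (3/2 - a - ℓ) = a by ring]
  rw [uuu, Real.rpow_sub hnpos a (1/2)]
  rw [show (3/2 - (ℓ:ℝ) + n + 1) = (n:ℝ) + 5/2 - ℓ by ring] at hΓ
  have h4 : (n:ℝ) ^ a ≠ 0 := (Real.rpow_pos_of_pos hnpos _).ne'
  field_simp

lemma uuu_summable (ha : 3/2 < a) (ha' : a < 5/2) (ℓ : ℕ) : Summable (uuu a ℓ) := by
  have h := tendsto_uuu_mul ha ha' ℓ
  have h1 : (fun n : ℕ => uuu a ℓ n * (n:ℝ) ^ (a - 1/2)) =O[atTop] (fun _ : ℕ => (1:ℝ)) :=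
    h.isBigO_one ℝ
  have h2 := h1.mul (Asymptotics.isBigO_refl (fun n : ℕ => (n:ℝ) ^ ((1:ℝ)/2 - a)) atTop)
  have h3 : (fun n : ℕ => uuu a ℓ n) =O[atTop] (fun n : ℕ => (n:ℝ) ^ ((1:ℝ)/2 - a)) := by
    refine h2.congr' ?_ ?_
    · filter_upwards [eventually_ge_atTop 1] with n hn
      have hnpos : (0:ℝ) < n := by exact_mod_cast hn
      rw [mul_assoc, ← Real.rpow_add hnpos, show (a - 1/2) + ((1:ℝ)/2 - a) = 0 by ring,
        Real.rpow_zero, mul_one]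
    · filter_upwards with n
      rw [one_mul]
  exact summable_of_isBigO_nat (Real.summable_nat_rpow.mpr (by linarith)) h3

lemma tendsto_TT (ha : 3/2 < a) (ha' : a < 5/2) (ℓ : ℕ) :
    Tendsto (TT a ℓ) atTop (𝓝 0) := by
  have f3 := tendsto_gamma_fact (-(1/2))
    (between_ne_neg_nat (k := -1) (by norm_num) (by norm_num))
  have f4 := tendsto_gamma_ratio (1/2 - a - ℓ) (1/2 - ℓ)
    (between_ne_neg_nat (k := -2 - ℓ) (by push_cast; linarith) (by push_cast; linarith))
    (between_ne_neg_nat (k := -ℓ) (by push_cast; linarith) (by push_cast; linarith))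
  have hg : Tendsto (fun n : ℕ => (n:ℝ) ^ ((3:ℝ)/2 - a) + (1/2) * (n:ℝ) ^ ((1:ℝ)/2 - a))
      atTop (𝓝 0) := by
    have t1 : Tendsto (fun x : ℝ => x ^ ((3:ℝ)/2 - a)) atTop (𝓝 0) := by
      have := tendsto_rpow_neg_atTop (y := a - 3/2) (by linarith)
      simpa [show -(a - 3/2) = 3/2 - a by ring] using this
    have t2 : Tendsto (fun x : ℝ => x ^ ((1:ℝ)/2 - a)) atTop (𝓝 0) := by
      have := tendsto_rpow_neg_atTop (y := a - 1/2) (by linarith)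
      simpa [show -(a - 1/2) = 1/2 - a by ring] using this
    have := (t1.comp tendsto_natCast_atTop_atTop).add
      (((t2.comp tendsto_natCast_atTop_atTop).const_mul (1/2 : ℝ)))
    simpa using this
  have h := (f3.mul f4).mul hg
  simp only [mul_one, one_mul, mul_zero] at h
  refine h.congr' ?_
  filter_upwards [eventually_ge_atTop 1] with n hn
  have hnpos : (0:ℝ) < n := by exact_mod_cast hn
  have hfact : ((n.factorial : ℝ)) ≠ 0 := by exact_mod_cast n.factorial_ne_zero
  have hΓC := gamma_C_ne ℓ n
  have e1 : (n:ℝ) ^ (a:ℝ) * (n:ℝ) ^ ((3:ℝ)/2 - a) = (n:ℝ) * (n:ℝ) ^ ((1:ℝ)/2) := by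
    rw [← Real.rpow_add hnpos, show a + ((3:ℝ)/2 - a) = 1 + (1:ℝ)/2 by ring,
      Real.rpow_add hnpos, Real.rpow_one]
  have e2 : (n:ℝ) ^ (a:ℝ) * (n:ℝ) ^ ((1:ℝ)/2 - a) = (n:ℝ) ^ ((1:ℝ)/2) := by
    rw [← Real.rpow_add hnpos, show a + ((1:ℝ)/2 - a) = (1:ℝ)/2 by ring]
  have e3 : (n:ℝ) ^ (-(1/2):ℝ) * (n:ℝ) ^ ((1:ℝ)/2) = 1 := by
    rw [← Real.rpow_add hnpos]; norm_num
  rw [show (-(1/2) : ℝ) + n + 1 = (n:ℝ) + 1/2 by ring,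
      show (1/2 - a - (ℓ:ℝ)) + n + 1 = (n:ℝ) + 3/2 - a - ℓ by ring,
      show (1/2 - (ℓ:ℝ)) + n + 1 = (n:ℝ) + 3/2 - ℓ by ring,
      show (1/2 - (ℓ:ℝ)) - (1/2 - a - ℓ) = a by ring, TT]
  have e4 : ((n:ℝ) ^ (-(1/2):ℝ))⁻¹ = (n:ℝ) ^ ((1:ℝ)/2) := by
    rw [show (-(1/2):ℝ) = -(1/2) from rfl, Real.rpow_neg hnpos.le, inv_inv]
  have e5 : (n:ℝ) ^ ((1:ℝ)/2) * (n:ℝ) ^ ((1:ℝ)/2) = (n:ℝ) := by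
    rw [← Real.rpow_add hnpos]; norm_num
  calc Real.Gamma ((n:ℝ) + 1/2) / (n.factorial * (n:ℝ) ^ (-(1/2):ℝ)) *
        (Real.Gamma ((n:ℝ) + 3/2 - a - ℓ) / Real.Gamma ((n:ℝ) + 3/2 - ℓ) * (n:ℝ) ^ (a:ℝ)) *
        ((n:ℝ) ^ ((3:ℝ)/2 - a) + 1/2 * (n:ℝ) ^ ((1:ℝ)/2 - a))
      = Real.Gamma ((n:ℝ) + 1/2) * Real.Gamma ((n:ℝ) + 3/2 - a - ℓ) /
          ((n.factorial : ℝ) * Real.Gamma ((n:ℝ) + 3/2 - ℓ)) *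
          (((n:ℝ) ^ (a:ℝ) * (n:ℝ) ^ ((3:ℝ)/2 - a)) + 1/2 * ((n:ℝ) ^ (a:ℝ) * (n:ℝ) ^ ((1:ℝ)/2 - a))) *
          ((n:ℝ) ^ (-(1/2):ℝ))⁻¹ := by ring
    _ = Real.Gamma ((n:ℝ) + 1/2) * Real.Gamma ((n:ℝ) + 3/2 - a - ℓ) /
          ((n.factorial : ℝ) * Real.Gamma ((n:ℝ) + 3/2 - ℓ)) *
          (((n:ℝ) * (n:ℝ) ^ ((1:ℝ)/2)) + 1/2 * (n:ℝ) ^ ((1:ℝ)/2)) * (n:ℝ) ^ ((1:ℝ)/2) := by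
        rw [e1, e2, e4]
    _ = TT a ℓ n := by
        rw [TT]
        linear_combination (Real.Gamma ((n:ℝ) + 1/2) * Real.Gamma ((n:ℝ) + 3/2 - a - ℓ) /
          ((n.factorial : ℝ) * Real.Gamma ((n:ℝ) + 3/2 - ℓ)) * ((n:ℝ) + 1/2)) * e5

lemma key_rel (ha : 3/2 < a) (ha' : a < 5/2) (ℓ : ℕ) :
    (ℓ:ℝ) * ∑' n, uuu a ℓ n + (3/2 - a - ℓ) * ∑' n, uuu a (ℓ+1) n = 0 := by
  have s1 := uuu_summable ha ha' ℓ
  have s2 := uuu_summable ha ha' (ℓ+1)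
  have hs : Summable (fun n => (ℓ:ℝ) * uuu a ℓ n + (3/2 - a - ℓ) * uuu a (ℓ+1) n) :=
    (s1.mul_left _).add (s2.mul_left _)
  have h1 := hs.hasSum.tendsto_sum_nat
  have h2 : (fun N => ∑ i ∈ Finset.range N,
      ((ℓ:ℝ) * uuu a ℓ i + (3/2 - a - ℓ) * uuu a (ℓ+1) i)) = fun N => TT a ℓ N := by
    funext N
    rw [Finset.sum_congr rfl (fun i _ => key_pointwise ha ha' ℓ i),
      Finset.sum_range_sub (TT a ℓ)]
    simp [TT]
  rw [h2] at h1
  have h3 : ∑' n, ((ℓ:ℝ) * uuu a ℓ n + (3/2 - a - ℓ) * uuu a (ℓ+1) n) = 0 :=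
    tendsto_nhds_unique h1 (tendsto_TT ha ha' ℓ)
  rwa [Summable.tsum_add (s1.mul_left _) (s2.mul_left _), tsum_mul_left, tsum_mul_left] at h3

lemma V_zero (ha : 3/2 < a) (ha' : a < 5/2) : ∀ ℓ : ℕ, ∑' n, uuu a (ℓ+1) n = 0 := by
  intro ℓ
  induction ℓ with
  | zero =>
    have h := key_rel ha ha' 0
    simp only [Nat.cast_zero, zero_mul, zero_add, sub_zero] at h
    have hne : (3/2 - a : ℝ) ≠ 0 := by intro h0; linarith
    exact (mul_eq_zero.mp h).resolve_left hne
  | succ m ih =>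
    have h := key_rel ha ha' (m+1)
    rw [ih, mul_zero, zero_add] at h
    have hne : (3/2 - a - ((m:ℝ)+1) : ℝ) ≠ 0 := by
      have : (0:ℝ) ≤ m := Nat.cast_nonneg m
      intro h0; linarith
    have := (mul_eq_zero.mp h).resolve_left (by push_cast; exact hne)
    exact this

lemma gamma_half (m : ℕ) :
    Real.Gamma ((m:ℝ) + 1/2) * 4^m * m.factorial = (2*m).factorial * Real.sqrt Real.pi := by
  induction m with
  | zero =>
    simp only [Nat.cast_zero, zero_add, pow_zero, Nat.mul_zero, Nat.factorial_zero,
      Nat.cast_one, mul_one, one_mul]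
    rw [Real.Gamma_one_half_eq]
  | succ m ih =>
    have h : Real.Gamma (((m+1:ℕ):ℝ) + 1/2) = ((m:ℝ) + 1/2) * Real.Gamma ((m:ℝ) + 1/2) := by
      rw [show ((m+1:ℕ):ℝ) + 1/2 = ((m:ℝ) + 1/2) + 1 by push_cast; ring,
        Real.Gamma_add_one (by positivity)]
    rw [h, show 2*(m+1) = (2*m+1)+1 by ring, Nat.factorial_succ ((2*m+1)),
      show (2*m+1) = (2*m)+1 by ring, Nat.factorial_succ (2*m), Nat.factorial_succ m]
    push_cast
    ring_nf
    ring_nf at ih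
    nlinarith [ih, Real.sqrt_nonneg Real.pi]

lemma hup_succ (n : ℕ) :
    hupZ ((n:ℤ) + 1) = 2 * Real.Gamma ((n:ℝ) + 3/2) / (Real.sqrt Real.pi * n.factorial) := by
  have h0 : (0:ℤ) < (n:ℤ) + 1 := by positivity
  rw [hupZ, if_pos h0]
  have ht : ((n:ℤ)+1).toNat = n + 1 := by omega
  rw [ht]
  have hch : (((2*(n+1)).choose (n+1)) : ℝ) * ((n+1).factorial * (n+1).factorial)
      = ((2*(n+1)).factorial : ℝ) := by
    exact_mod_cast congrArg (fun x : ℕ => (x:ℝ))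
      (by rw [← Nat.choose_mul_factorial_mul_factorial (by omega : n+1 ≤ 2*(n+1)),
              show 2*(n+1) - (n+1) = n+1 by omega]; ring)
  have hgh := gamma_half (n+1)
  have hΓarg : Real.Gamma (((n+1:ℕ):ℝ) + 1/2) = Real.Gamma ((n:ℝ) + 3/2) := by
    congr 1; push_cast; ring
  rw [hΓarg] at hgh
  have hsπ : Real.sqrt Real.pi ≠ 0 := (Real.sqrt_pos.mpr Real.pi_pos).ne'
  have hf1 : ((n+1).factorial : ℝ) ≠ 0 := by exact_mod_cast (n+1).factorial_ne_zero
  have hf : ((n).factorial : ℝ) ≠ 0 := by exact_mod_cast (n).factorial_ne_zero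
  have h4 : ((4:ℝ) ^ (n+1)) ≠ 0 := by positivity
  have hfs : ((n+1).factorial : ℝ) = ((n:ℝ)+1) * n.factorial := by
    rw [Nat.factorial_succ]; push_cast; ring
  rw [eq_div_iff (mul_ne_zero hsπ hf)]
  rw [hfs] at hch hgh
  have hn1 : ((n:ℝ)+1) ≠ 0 := by positivity
  have h4c : (4:ℝ)^(n+1) * ((4:ℝ)^(n+1))⁻¹ = 1 := mul_inv_cancel₀ h4
  push_cast
  refine mul_right_cancel₀ (mul_ne_zero h4 (mul_ne_zero hn1 hf)) ?_
  linear_combination (2*Real.sqrt Real.pi*((4:ℝ)^(n+1))⁻¹*(4:ℝ)^(n+1)) * hch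
    + (2*Real.sqrt Real.pi*(((2*(n+1)).factorial:ℕ):ℝ)) * h4c - 2 * hgh

/-- For the special step law `ν(k) = c·Γ(3/2−a+k)/Γ(3/2+k)·1_{k≠0}` with
`c = −√π/(2Γ(3/2−a))` and `a ∈ (3/2, 5/2)`, the function `h↑` is `ν`-harmonic on
`ℤ_{>0}`: `Σ_{k∈ℤ} h↑(ℓ+k)·ν(k) = h↑(ℓ)` for every `ℓ > 0`. -/
theorem hup_nu_harmonic (a c : ℝ)
    (ha : 3 / 2 < a) (ha' : a < 5 / 2)
    (hc : c = -Real.sqrt Real.pi / (2 * Real.Gamma (3 / 2 - a)))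
    (ν : ℤ → ℝ)
    (hν : ∀ k : ℤ, ν k =
      if k = 0 then 0
      else c * Real.Gamma (3 / 2 - a + (k : ℝ)) / Real.Gamma (3 / 2 + (k : ℝ))) :
    ∀ ℓ : ℤ, 0 < ℓ → ∑' k : ℤ, hupZ (ℓ + k) * ν k = hupZ ℓ := by
  intro ℓ hℓ
  lift ℓ to ℕ using hℓ.le with L
  have hL : 1 ≤ L := by exact_mod_cast hℓ
  set K : ℝ := 2 * c / Real.sqrt Real.pi with hK
  -- Step A: reindex
  have hre : ∑' k : ℤ, hupZ ((L:ℤ) + k) * ν k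
      = ∑' n : ℕ, hupZ ((L:ℤ) + ((n:ℤ) + 1 - L)) * ν ((n:ℤ) + 1 - L) := by
    refine (Function.Injective.tsum_eq (g := fun n : ℕ => (n:ℤ) + 1 - L) ?_ ?_).symm
    · intro i j h
      simpa using h
    · intro k hk
      have hne : hupZ ((L:ℤ) + k) * ν k ≠ 0 := hk
      have hpos : 0 < (L:ℤ) + k := by
        by_contra hneg
        rw [hupZ, if_neg hneg] at hne
        simp at hne
      refine ⟨(k + L - 1).toNat, ?_⟩
      show ((k + (L:ℤ) - 1).toNat : ℤ) + 1 - L = k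
      omega
  -- Step B: identify terms
  have hterm : ∀ n : ℕ, hupZ ((L:ℤ) + ((n:ℤ) + 1 - L)) * ν ((n:ℤ) + 1 - L)
      = (if n = L - 1 then 0 else K * uuu a L n) := by
    intro n
    have harg : (L:ℤ) + ((n:ℤ) + 1 - L) = (n:ℤ) + 1 := by ring
    rw [harg, hup_succ n, hν]
    by_cases hn : n = L - 1
    · rw [if_pos (by omega : (n:ℤ) + 1 - L = 0), if_pos hn, mul_zero]
    · rw [if_neg (by omega : ¬((n:ℤ) + 1 - L = 0)), if_neg hn]
      have hc1 : (((n:ℤ) + 1 - L : ℤ) : ℝ) = (n:ℝ) + 1 - L := by push_cast; ring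
      rw [hc1, show (3:ℝ)/2 - a + ((n:ℝ) + 1 - L) = (n:ℝ) + 5/2 - a - L by ring,
        show (3:ℝ)/2 + ((n:ℝ) + 1 - L) = (n:ℝ) + 5/2 - L by ring, uuu]
      have hΓ : Real.Gamma ((n:ℝ) + 5/2 - L) ≠ 0 :=
        Real.Gamma_ne_zero (between_ne_neg_nat (k := (n:ℤ) + 2 - L)
          (by push_cast; linarith) (by push_cast; linarith))
      have hf : ((n.factorial : ℝ)) ≠ 0 := by exact_mod_cast n.factorial_ne_zero
      have hsπ : Real.sqrt Real.pi ≠ 0 := (Real.sqrt_pos.mpr Real.pi_pos).ne'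
      rw [hK]
      field_simp
  rw [hre, tsum_congr hterm]
  -- Step C: split off the deleted term
  have hs : Summable (fun n => K * uuu a L n) := (uuu_summable ha ha' L).mul_left _
  have hδ : Summable (fun n : ℕ => if n = L - 1 then K * uuu a L (L-1) else 0) :=
    (hasSum_ite_eq (L-1) (K * uuu a L (L-1))).summable
  have hsplit : (fun n : ℕ => (if n = L - 1 then 0 else K * uuu a L n))
      = fun n => K * uuu a L n - (if n = L - 1 then K * uuu a L (L-1) else 0) := by
    funext n
    by_cases hn : n = L - 1
    · simp [hn]
    · simp [hn]
  rw [hsplit, Summable.tsum_sub hs hδ, tsum_ite_eq, tsum_mul_left]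
  -- Step D: the series vanishes
  have hV : ∑' n, uuu a L n = 0 := by
    have := V_zero ha ha' (L-1)
    rwa [show L - 1 + 1 = L by omega] at this
  rw [hV, mul_zero, zero_sub]
  -- Step E: evaluate the remaining term
  have hL1 : ((L - 1 : ℕ) : ℝ) = (L:ℝ) - 1 := by
    have : ((L - 1 : ℕ) : ℤ) = (L:ℤ) - 1 := by omega
    exact_mod_cast this
  have hhup : hupZ (L:ℤ) = 2 * Real.Gamma (((L-1:ℕ):ℝ) + 3/2) / (Real.sqrt Real.pi * (L-1).factorial) := by
    rw [show (L:ℤ) = ((L-1:ℕ):ℤ) + 1 by omega, hup_succ (L-1)]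
  have hΓ32 : Real.Gamma ((3:ℝ)/2) = Real.sqrt Real.pi / 2 := by
    rw [show (3:ℝ)/2 = 1/2 + 1 by norm_num, Real.Gamma_add_one (by norm_num),
      Real.Gamma_one_half_eq]
    ring
  have hΓa : Real.Gamma (3/2 - a) ≠ 0 :=
    Real.Gamma_ne_zero (between_ne_neg_nat (k := -1) (by push_cast; linarith) (by push_cast; linarith))
  have hf : (((L-1).factorial : ℝ)) ≠ 0 := by exact_mod_cast (L-1).factorial_ne_zero
  have hsπ : Real.sqrt Real.pi ≠ 0 := (Real.sqrt_pos.mpr Real.pi_pos).ne'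
  have hKval : K = -1 / Real.Gamma (3/2 - a) := by
    rw [hK, hc, div_eq_div_iff hsπ hΓa]
    have cc : ((2:ℝ) * Real.Gamma (3/2-a)) * (((2:ℝ) * Real.Gamma (3/2-a)))⁻¹ = 1 :=
      mul_inv_cancel₀ (mul_ne_zero two_ne_zero hΓa)
    linear_combination (-Real.sqrt Real.pi) * cc
  rw [hhup, uuu, hL1,
    show (L:ℝ) - 1 + 5/2 - a - L = 3/2 - a by ring,
    show (L:ℝ) - 1 + 5/2 - L = (3:ℝ)/2 by ring, hΓ32, hKval]
  set G1 := Real.Gamma ((L:ℝ) - 1 + 3/2) with hG1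
  set Ga := Real.Gamma (3/2 - a) with hGa
  set S := Real.sqrt Real.pi with hS
  set F := ((L-1).factorial : ℝ) with hF
  field_simp
end
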